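/- Let ν be a Borel measure on ℝ^d with ν(B₁ᶜ) = 0 and ν(B_εᶜ) < ∞ for every ε > 0 (where B_r is the closed ball of radius r). Then for every k ≥ 1 and every r > k−1, the k-fold convolution ν^(k) satisfies ν^(k)(B_rᶜ) < ∞; that is, ν^(k) is a Radon measure on ℝ^d \ B_{k−1}. -/

import Mathlib

open MeasureTheory


open Set in
lemma pi_apply_le_prod {ι : Type*} [Fintype ι] {α : ι → Type*} [∀ i, MeasurableSpace (α i)]
    (μ : ∀ i, Measure (α i)) (s : ∀ i, Set (α i)) (hs : ∀ i, MeasurableSet (s i)) :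
    Measure.pi μ (Set.pi Set.univ s) ≤ ∏ i, μ i (s i) := by
  rw [Measure.pi_def, toMeasure_apply _ _ (MeasurableSet.pi countable_univ fun i _ => hs i)]
  exact OuterMeasure.pi_pi_le _ _

/-- If `ν` is a Borel measure on `ℝ^d` supported on the closed unit ball which is finite outside
every ball of positive radius, then for every `k ≥ 1` and `r > k - 1` the `k`-fold convolution
`ν^(k)` satisfies `ν^(k)(B_rᶜ) < ∞`, i.e. `ν^(k)` is Radon on `ℝ^d \ B_{k-1}`. -/
theorem stmt3 (d : ℕ) (ν : Measure (EuclideanSpace ℝ (Fin d)))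
    (hsupp : ν {x | 1 < ‖x‖} = 0)
    (hfin : ∀ ε : ℝ, 0 < ε → ν {x | ε < ‖x‖} < ⊤)
    (k : ℕ) (hk : 1 ≤ k) (r : ℝ) (hr : (k : ℝ) - 1 < r) :
    (Measure.map (fun x : Fin k → EuclideanSpace ℝ (Fin d) => ∑ i, x i)
      (Measure.pi fun _ : Fin k => ν)) {x | r < ‖x‖} < ⊤ := by
  set ε : ℝ := r - ((k : ℝ) - 1) with hε
  have hε0 : 0 < ε := by simp [hε]; linarith
  have hmeas : Measurable (fun x : Fin k → EuclideanSpace ℝ (Fin d) => ∑ i, x i) := by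
    exact Finset.measurable_sum _ fun i _ => measurable_pi_apply i
  have hset : MeasurableSet {x : EuclideanSpace ℝ (Fin d) | r < ‖x‖} :=
    measurableSet_lt measurable_const measurable_norm
  rw [Measure.map_apply hmeas hset]
  have hsub : (fun x : Fin k → EuclideanSpace ℝ (Fin d) => ∑ i, x i) ⁻¹' {x | r < ‖x‖} ⊆
      (⋃ i : Fin k, Set.pi Set.univ (fun j => if j = i then {y : EuclideanSpace ℝ (Fin d) | 1 < ‖y‖} else Set.univ)) ∪
      Set.pi Set.univ (fun _ : Fin k => {y : EuclideanSpace ℝ (Fin d) | ε < ‖y‖}) := by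
    intro x hx
    simp only [Set.mem_preimage, Set.mem_setOf_eq] at hx
    by_cases hb : ∃ i, 1 < ‖x i‖
    · obtain ⟨i, hi⟩ := hb
      left
      exact Set.mem_iUnion.2 ⟨i, fun j _ => by by_cases h : j = i <;> simp [h, hi]⟩
    · push_neg at hb
      right
      intro i _
      simp only [Set.mem_setOf_eq]
      have h1 : ‖∑ j, x j‖ ≤ ∑ j, ‖x j‖ := norm_sum_le _ _
      have h2 : ∑ j, ‖x j‖ = ‖x i‖ + ∑ j ∈ Finset.univ.erase i, ‖x j‖ := by
        rw [← Finset.add_sum_erase _ _ (Finset.mem_univ i)]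
      have h3 : ∑ j ∈ Finset.univ.erase i, ‖x j‖ ≤ (k : ℝ) - 1 := by
        calc ∑ j ∈ Finset.univ.erase i, ‖x j‖ ≤ ∑ j ∈ Finset.univ.erase i, 1 :=
              Finset.sum_le_sum fun j _ => hb j
          _ = (k : ℝ) - 1 := by
              simp [Finset.card_erase_of_mem, Nat.cast_sub hk]
      have : r < ‖x i‖ + ((k : ℝ) - 1) := by
        calc r < ‖∑ j, x j‖ := hx
          _ ≤ ‖x i‖ + ∑ j ∈ Finset.univ.erase i, ‖x j‖ := by rw [← h2]; exact h1
          _ ≤ ‖x i‖ + ((k : ℝ) - 1) := by linarith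
      linarith
  calc (Measure.pi fun _ : Fin k => ν) _ ≤ _ := measure_mono hsub
    _ ≤ (Measure.pi fun _ : Fin k => ν)
          (⋃ i : Fin k, Set.pi Set.univ (fun j => if j = i then {y : EuclideanSpace ℝ (Fin d) | 1 < ‖y‖} else Set.univ)) +
        (Measure.pi fun _ : Fin k => ν)
          (Set.pi Set.univ (fun _ : Fin k => {y : EuclideanSpace ℝ (Fin d) | ε < ‖y‖})) := measure_union_le _ _
    _ < ⊤ := by
        have hA : ∀ i : Fin k, (Measure.pi fun _ : Fin k => ν)
            (Set.pi Set.univ (fun j => if j = i then {y : EuclideanSpace ℝ (Fin d) | 1 < ‖y‖} else Set.univ)) = 0 := by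
          intro i
          refine le_antisymm (le_trans (pi_apply_le_prod _ _ ?_) ?_) zero_le
          · intro j
            by_cases h : j = i <;>
              simp [h, measurableSet_lt measurable_const measurable_norm]
          · refine le_of_eq (Finset.prod_eq_zero (Finset.mem_univ i) ?_)
            simp [hsupp]
        have h1 : (Measure.pi fun _ : Fin k => ν)
            (⋃ i : Fin k, Set.pi Set.univ (fun j => if j = i then {y : EuclideanSpace ℝ (Fin d) | 1 < ‖y‖} else Set.univ)) = 0 := by
          refine le_antisymm (le_trans (measure_iUnion_le _) ?_) zero_le
          simp [hA]
        have h2 : (Measure.pi fun _ : Fin k => ν)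
            (Set.pi Set.univ (fun _ : Fin k => {y : EuclideanSpace ℝ (Fin d) | ε < ‖y‖})) < ⊤ := by
          refine lt_of_le_of_lt (pi_apply_le_prod _ _ fun i =>
            measurableSet_lt measurable_const measurable_norm) ?_
          exact ENNReal.prod_lt_top fun i _ => hfin ε hε0
        rw [h1, zero_add]
        exact h2
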